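/- A polygon (cycle graph) admitting a geometric realization as a Matsumoto graph of degree 2 must have an even number of edges. -/

import Mathlib

/-- A (pre-)Matsumoto graph of degree `d` realized in the real vector space `M`:
vertices, oriented compact edges labelled by their root (ingoing at the target),
infinite edges attached to a single vertex and labelled by their root, and the
family of roots of the ingoing edges at each vertex. -/
structure MatsumotoGraph (d : ℕ) (M : Type*) [AddCommGroup M] [Module ℝ M] where
  Vx : Type*
  adj : Vx → Vx → M → Prop
  inf : Vx → M → Prop
  basisAt : Vx → Fin d → M

namespace MatsumotoGraph

variable {d : ℕ} {M : Type*} [AddCommGroup M] [Module ℝ M] (G : MatsumotoGraph d M)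

/-- The set of roots. -/
def R : Set M := {α | (∃ v v', G.adj v v' α) ∨ ∃ v, G.inf v α}

/-- Membership in the convex cone generated by the ingoing roots at `v`. -/
def inCone (v : G.Vx) (α : M) : Prop :=
  ∃ c : Fin d → ℝ, (∀ i, 0 ≤ c i) ∧ α = ∑ i, c i • G.basisAt v i

/-- The positive system at a vertex. -/
def pos (v : G.Vx) : Set M := {α ∈ G.R | G.inCone v α}

/-- The negative system at a vertex. -/
def neg (v : G.Vx) : Set M := G.R \ G.pos v

/-- The convex cone generated by two vectors. -/
def cone2 (x y : M) : Set M := {z | ∃ a b : ℝ, 0 ≤ a ∧ 0 ≤ b ∧ z = a • x + b • y}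

/-- The axioms of a Matsumoto graph. -/
structure Axioms : Prop where
  adj_symm : ∀ {v v' α}, G.adj v v' α → G.adj v' v (-α)
  basis_indep : ∀ v, LinearIndependent ℝ (G.basisAt v)
  basis_span : ∀ v, Submodule.span ℝ (Set.range (G.basisAt v)) = ⊤
  ingoing : ∀ v α, ((∃ v', G.adj v' v α) ∨ G.inf v α) ↔ ∃ i, α = G.basisAt v i
  inf_noninv : ∀ v α, G.inf v α → -α ∉ G.R
  step : ∀ v v' α, G.adj v v' α → G.pos v' \ G.pos v = {α}
  posdet : ∀ v v', G.pos v = G.pos v' → v = v'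
  connected : ∀ v v', Relation.ReflTransGen (fun a b => ∃ α, G.adj a b α) v v'

/-- Walks in the graph (along compact edges), recording the roots of the traversed edges. -/
inductive Walk : G.Vx → G.Vx → Type _
  | nil (v : G.Vx) : Walk v v
  | cons {v w u : G.Vx} (α : M) (h : G.adj v w α) (p : Walk w u) : Walk v u

variable {G}

def Walk.length : ∀ {v v' : G.Vx}, G.Walk v v' → ℕ
  | _, _, .nil _ => 0
  | _, _, .cons _ _ p => p.length + 1

def Walk.roots : ∀ {v v' : G.Vx}, G.Walk v v' → List M
  | _, _, .nil _ => []
  | _, _, .cons α _ p => α :: p.roots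

def Walk.append : ∀ {v w u : G.Vx}, G.Walk v w → G.Walk w u → G.Walk v u
  | _, _, _, .nil _, q => q
  | _, _, _, .cons α h p, q => .cons α h (p.append q)

variable (G)

/-- The graph distance between two vertices. -/
noncomputable def dist (v v' : G.Vx) : ℕ := sInf {n | ∃ p : G.Walk v v', p.length = n}

end MatsumotoGraph


open scoped Classical

section ListLemma

variable {α : Type*} [InvolutiveNeg α]

/-- If every element of a list has an even count for its `±`-class, the list has even length. -/
private lemma even_length_of_class_counts :
    ∀ (n : ℕ) (L : List α), L.length ≤ n →
      (∀ β ∈ L, Even (L.countP (fun γ => decide (γ = β ∨ γ = -β)))) → Even L.length := by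
  intro n
  induction n with
  | zero =>
    intro L hL _
    simp only [Nat.le_zero, List.length_eq_zero_iff] at hL
    simp [hL]
  | succ n ih =>
    intro L hL hcnt
    match L with
    | [] => simp
    | β :: T =>
      set P : α → Bool := fun γ => decide (γ = β ∨ γ = -β) with hP
      set L : List α := β :: T with hLdef
      have hPβ : P β = true := by simp [hP]
      have hc1 : 1 ≤ L.countP P := by
        rw [hLdef, List.countP_cons_of_pos hPβ]; omega
      set L' : List α := L.filter (fun γ => decide ¬(P γ = true)) with hL'
      have hsplit : L.length = L.countP P + L'.length := by
        rw [hL', ← List.countP_eq_length_filter]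
        exact List.length_eq_countP_add_countP (p := P)
      have hkey : ∀ δ ∈ L, ∀ γ : α, P γ = false → (decide (δ = γ ∨ δ = -γ) = true) → P δ = false := by
        intro δ _ γ hγ hδ
        simp only [decide_eq_true_eq] at hδ
        simp only [hP, decide_eq_false_iff_not, not_or] at hγ ⊢
        rcases hδ with rfl | rfl
        · exact hγ
        · constructor
          · intro h; exact hγ.2 (by rw [← h, neg_neg])
          · intro h; exact hγ.1 (by rw [neg_inj] at h; rw [h])
      have hcnt' : ∀ γ ∈ L', Even (L'.countP (fun δ => decide (δ = γ ∨ δ = -γ))) := by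
        intro γ hγ
        have hγL : γ ∈ L := List.mem_of_mem_filter hγ
        have hγP : P γ = false := by
          have := List.of_mem_filter hγ
          simpa using this
        have : L'.countP (fun δ => decide (δ = γ ∨ δ = -γ)) =
            L.countP (fun δ => decide (δ = γ ∨ δ = -γ)) := by
          rw [hL', List.countP_filter]
          apply List.countP_congr
          intro δ hδ
          constructor
          · intro h; exact (Bool.and_elim_left h)
          · intro h
            have := hkey δ hδ γ hγP h
            simp [h, this]
        rw [this]
        exact hcnt γ hγL
      have hlenL' : L'.length ≤ n := by
        have : L.length ≤ n + 1 := hL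
        omega
      have hEvL' : Even L'.length := ih L' hlenL' hcnt'
      rw [hsplit]
      exact (hcnt β (by simp [hLdef])).add hEvL'

end ListLemma

open scoped Classical

namespace MatsumotoGraph

variable {d : ℕ} {M : Type*} [AddCommGroup M] [Module ℝ M] {G : MatsumotoGraph d M}

lemma Walk.length_append : ∀ {v w u : G.Vx} (p : G.Walk v w) (q : G.Walk w u),
    (p.append q).length = p.length + q.length
  | _, _, _, .nil _, q => by simp [Walk.append, Walk.length]
  | _, _, _, .cons α h p, q => by
      simp only [Walk.append, Walk.length, Walk.length_append p q]; omega

def Walk.reverse (hG : G.Axioms) : ∀ {v w : G.Vx}, G.Walk v w → G.Walk w v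
  | _, _, .nil v => .nil v
  | _, _, .cons α h p => (p.reverse hG).append (.cons (-α) (hG.adj_symm h) (.nil _))

lemma Walk.length_reverse (hG : G.Axioms) : ∀ {v w : G.Vx} (p : G.Walk v w),
    (p.reverse hG).length = p.length
  | _, _, .nil v => rfl
  | _, _, .cons α h p => by
      simp only [Walk.reverse, Walk.length_append, Walk.length_reverse hG p, Walk.length]

lemma Walk.roots_length : ∀ {v w : G.Vx} (p : G.Walk v w), p.roots.length = p.length
  | _, _, .nil v => rfl
  | _, _, .cons α h p => by simp [Walk.roots, Walk.length, Walk.roots_length p]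

/-- `ZMod 2`-valued indicator of a proposition. -/
noncomputable def ind (P : Prop) : ZMod 2 := if P then 1 else 0

lemma toggle (hG : G.Axioms) {v v' : G.Vx} {α : M} (h : G.adj v v' α) (β : M) :
    ind (β ∈ G.pos v') = ind (β ∈ G.pos v) + ind (α = β ∨ α = -β) := by
  have h1 := hG.step v v' α h
  have h2 := hG.step v' v (-α) (hG.adj_symm h)
  have hα : α ∈ G.pos v' ∧ α ∉ G.pos v := by
    have : α ∈ G.pos v' \ G.pos v := h1 ▸ rfl
    exact this
  have hm : -α ∈ G.pos v ∧ -α ∉ G.pos v' := by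
    have : -α ∈ G.pos v \ G.pos v' := h2 ▸ rfl
    exact this
  by_cases hβ : α = β
  · subst hβ
    simp [ind, hα.1, hα.2]
  · by_cases hβ' : α = -β
    · have hβn : β = -α := by rw [hβ', neg_neg]
      subst hβn
      simp only [ind]
      rw [if_neg hm.2, if_pos hm.1, if_pos (Or.inr (neg_neg α).symm)]
      decide
    · have hne : ¬(α = β ∨ α = -β) := by tauto
      have hiff : β ∈ G.pos v' ↔ β ∈ G.pos v := by
        constructor
        · intro hmem
          by_contra hnot
          have : β ∈ G.pos v' \ G.pos v := ⟨hmem, hnot⟩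
          rw [h1] at this
          exact hβ this.symm
        · intro hmem
          by_contra hnot
          have : β ∈ G.pos v \ G.pos v' := ⟨hmem, hnot⟩
          rw [h2] at this
          have hb : β = -α := this
          exact hβ' (by rw [hb, neg_neg])
      simp [ind, hiff, hne]

lemma count_walk (hG : G.Axioms) : ∀ {u u' : G.Vx} (w : G.Walk u u') (β : M),
    ind (β ∈ G.pos u') = ind (β ∈ G.pos u)
      + ((w.roots.countP (fun γ => decide (γ = β ∨ γ = -β)) : ℕ) : ZMod 2)
  | _, _, .nil v, β => by simp [Walk.roots]
  | _, _, .cons α h p, β => by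
      have ih := count_walk hG p β
      have ht := toggle hG h β
      rw [Walk.roots, List.countP_cons]
      push_cast
      rw [ih, ht]
      by_cases hc : α = β ∨ α = -β <;> simp [ind, hc] <;> ring

lemma even_length_closed (hG : G.Axioms) {u : G.Vx} (w : G.Walk u u) : Even w.length := by
  rw [← Walk.roots_length w]
  apply even_length_of_class_counts w.roots.length w.roots le_rfl
  intro β _
  have := count_walk hG w β
  have hz : ((w.roots.countP (fun γ => decide (γ = β ∨ γ = -β)) : ℕ) : ZMod 2) = 0 := by
    have := this.symm
    rwa [add_eq_left] at this
  rw [ZMod.natCast_eq_zero_iff] at hz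
  exact (even_iff_two_dvd).2 hz

lemma nonempty_walk (hG : G.Axioms) (v v' : G.Vx) : Nonempty (G.Walk v v') := by
  have h := hG.connected v v'
  induction h with
  | refl => exact ⟨.nil v⟩
  | tail hab hbc ih =>
      obtain ⟨w⟩ := ih
      obtain ⟨α, ha⟩ := hbc
      exact ⟨w.append (.cons α ha (.nil _))⟩

end MatsumotoGraph

namespace MatsumotoGraph

section Degree2

variable {M : Type*} [AddCommGroup M] [Module ℝ M] {G : MatsumotoGraph 2 M}

/-- The positive system of a neighbour is determined by the vertex and the root. -/
lemma pos_src (hG : G.Axioms) {v w : G.Vx} {α : M} (h : G.adj w v α) :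
    G.pos w = (G.pos v \ {α}) ∪ {-α} := by
  have e1 := hG.step w v α h
  have e2 := hG.step v w (-α) (hG.adj_symm h)
  have hα : α ∈ G.pos v ∧ α ∉ G.pos w := by
    have : α ∈ G.pos v \ G.pos w := e1 ▸ rfl
    exact this
  have hm : -α ∈ G.pos w ∧ -α ∉ G.pos v := by
    have : -α ∈ G.pos w \ G.pos v := e2 ▸ rfl
    exact this
  ext x
  constructor
  · intro hx
    by_cases hxv : x ∈ G.pos v
    · left
      refine ⟨hxv, ?_⟩
      intro hxα
      have : x = α := hxα
      rw [this] at hx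
      exact hα.2 hx
    · right
      have : x ∈ G.pos w \ G.pos v := ⟨hx, hxv⟩
      rw [e2] at this
      exact this
  · rintro (⟨hxv, hxα⟩ | hx)
    · by_contra hxw
      have : x ∈ G.pos v \ G.pos w := ⟨hxv, hxw⟩
      rw [e1] at this
      exact hxα this
    · have : x = -α := hx
      rw [this]
      exact hm.1

lemma adj_unique (hG : G.Axioms) {v w w' : G.Vx} {α : M}
    (h : G.adj w v α) (h' : G.adj w' v α) : w = w' := by
  apply hG.posdet
  rw [pos_src hG h, pos_src hG h']

lemma exists_src (hG : G.Axioms) (hnoinf : ∀ v α, ¬ G.inf v α) (v : G.Vx) (i : Fin 2) :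
    ∃ w, G.adj w v (G.basisAt v i) := by
  rcases (hG.ingoing v (G.basisAt v i)).mpr ⟨i, rfl⟩ with h | h
  · exact h
  · exact absurd h (hnoinf _ _)

variable (hG : G.Axioms) (hnoinf : ∀ v α, ¬ G.inf v α)

/-- The source of the edge ingoing at `v` with root `basisAt v i`. -/
noncomputable def src (v : G.Vx) (i : Fin 2) : G.Vx :=
  Classical.choose (exists_src hG hnoinf v i)

lemma adj_src (v : G.Vx) (i : Fin 2) : G.adj (src hG hnoinf v i) v (G.basisAt v i) :=
  Classical.choose_spec (exists_src hG hnoinf v i)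

lemma exists_idx (v : G.Vx) (i : Fin 2) :
    ∃ j, -(G.basisAt v i) = G.basisAt (src hG hnoinf v i) j :=
  (hG.ingoing (src hG hnoinf v i) _).mp (Or.inl ⟨v, hG.adj_symm (adj_src hG hnoinf v i)⟩)

/-- The index of the reversed edge at the source. -/
noncomputable def sIdx (v : G.Vx) (i : Fin 2) : Fin 2 :=
  Classical.choose (exists_idx hG hnoinf v i)

lemma basis_sIdx (v : G.Vx) (i : Fin 2) :
    -(G.basisAt v i) = G.basisAt (src hG hnoinf v i) (sIdx hG hnoinf v i) :=
  Classical.choose_spec (exists_idx hG hnoinf v i)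

/-- The edge-end flipping involution on (vertex, ingoing-index) pairs. -/
noncomputable def iot (x : G.Vx × Fin 2) : G.Vx × Fin 2 :=
  (src hG hnoinf x.1 x.2, sIdx hG hnoinf x.1 x.2)

lemma iot_invol (x : G.Vx × Fin 2) : iot hG hnoinf (iot hG hnoinf x) = x := by
  obtain ⟨v, i⟩ := x
  set w := src hG hnoinf v i with hw
  set j := sIdx hG hnoinf v i with hj
  have hbj : G.basisAt w j = -(G.basisAt v i) := (basis_sIdx hG hnoinf v i).symm
  have h1 : G.adj v w (G.basisAt w j) := by
    rw [hbj]; exact hG.adj_symm (adj_src hG hnoinf v i)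
  have hsw : src hG hnoinf w j = v := adj_unique hG (adj_src hG hnoinf w j) h1
  have h2 := basis_sIdx hG hnoinf w j
  rw [hsw, hbj, neg_neg] at h2
  have h4 : sIdx hG hnoinf w j = i := ((hG.basis_indep v).injective h2).symm
  show (src hG hnoinf w j, sIdx hG hnoinf w j) = (v, i)
  rw [hsw, h4]

end Degree2

end MatsumotoGraph

/-- A polygon (finite connected degree-2 graph with only compact edges) admitting a
geometric realization as a Matsumoto graph has an even number of edges (equivalently,
of vertices). -/
theorem polygon_even {M : Type*} [AddCommGroup M] [Module ℝ M]
    (G : MatsumotoGraph 2 M) (hG : G.Axioms)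
    (hfin : Finite G.Vx) (hnoinf : ∀ v α, ¬ G.inf v α) :
    Even (Nat.card G.Vx) := by
  classical
  open MatsumotoGraph in
  rcases isEmpty_or_nonempty G.Vx with h | h
  · simp [Nat.card_of_isEmpty]
  · obtain ⟨v0⟩ := h
    have : Fintype G.Vx := Fintype.ofFinite G.Vx
    let p : G.Vx → ZMod 2 :=
      fun v => ((Classical.choice (nonempty_walk hG v0 v)).length : ZMod 2)
    have hflip : ∀ (v v' : G.Vx) (α : M), G.adj v v' α → p v' = p v + 1 := by
      intro v v' α h
      have hev : Even (((Classical.choice (nonempty_walk hG v0 v)).append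
          (.cons α h ((Classical.choice (nonempty_walk hG v0 v')).reverse hG))).length) :=
        even_length_closed hG _
      rw [Walk.length_append, Walk.length, Walk.length_reverse] at hev
      have hz := (ZMod.natCast_eq_zero_iff _ 2).mpr (even_iff_two_dvd.mp hev)
      push_cast at hz
      have harith : ∀ x y : ZMod 2, x + (y + 1) = 0 → y = x + 1 := by decide
      exact harith _ _ hz
    have hpflip : ∀ x : G.Vx × Fin 2, p ((iot hG hnoinf x).1) = p x.1 + 1 := by
      rintro ⟨v, i⟩
      have h := hflip _ _ _ (adj_src hG hnoinf v i)
      have h2 : ∀ x y : ZMod 2, x = y + 1 → y = x + 1 := by decide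
      exact h2 _ _ h
    have key : Fintype.card {x : G.Vx × Fin 2 // p x.1 = 0}
        = Fintype.card {x : G.Vx × Fin 2 // p x.1 = 1} := by
      refine Fintype.card_congr
        { toFun := fun x => ⟨iot hG hnoinf x.1, by rw [hpflip, x.2]; decide⟩
          invFun := fun x => ⟨iot hG hnoinf x.1, by rw [hpflip, x.2]; decide⟩
          left_inv := fun x => Subtype.ext (iot_invol hG hnoinf x.1)
          right_inv := fun x => Subtype.ext (iot_invol hG hnoinf x.1) }
    have hsplit : ∀ c : ZMod 2, Fintype.card {x : G.Vx × Fin 2 // p x.1 = c}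
        = Fintype.card {v : G.Vx // p v = c} * 2 := by
      intro c
      have e : {x : G.Vx × Fin 2 // p x.1 = c} ≃ {v : G.Vx // p v = c} × Fin 2 :=
        { toFun := fun x => (⟨x.1.1, x.2⟩, x.1.2)
          invFun := fun y => ⟨(y.1.1, y.2), y.1.2⟩
          left_inv := fun ⟨⟨a, b⟩, h⟩ => rfl
          right_inv := fun ⟨⟨a, h⟩, b⟩ => rfl }
      rw [Fintype.card_congr e, Fintype.card_prod, Fintype.card_fin]
    rw [hsplit 0, hsplit 1] at key
    have hk : Fintype.card {v : G.Vx // p v = 0} = Fintype.card {v : G.Vx // p v = 1} := by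
      omega
    have hVx : Fintype.card G.Vx
        = Fintype.card {v : G.Vx // p v = 0} + Fintype.card {v : G.Vx // p v = 1} := by
      have e2 : {v : G.Vx // ¬ p v = 0} ≃ {v : G.Vx // p v = 1} :=
        Equiv.subtypeEquivRight (fun v => by
          have : ∀ x : ZMod 2, ¬x = 0 ↔ x = 1 := by decide
          exact this _)
      rw [← Fintype.card_congr e2,
        Fintype.card_congr (Equiv.sumCompl (fun v => p v = 0)).symm, Fintype.card_sum]
    rw [Nat.card_eq_fintype_card, hVx, hk]
    exact ⟨_, rfl⟩
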